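/- Fix integers k ≥ 0 and n ≥ k+4, and let E be the set of 2-element subsets of [n]. Define the following subspaces of ℝ^E: V_{1,e} = ℝ·v_e for each 2-subset e of [k]; V_{1,j}' = ℝ·(Σ_{i=k+1}^n v_{{j,i}}) for each j ∈ [k]; V_{1}'' = ℝ·(Σ_{k+1≤i<j≤n} v_{{i,j}}); for j ∈ [k], V_{2,j} = {Σ_{i=k+1}^n c_i v_{{j,i}} : c ∈ ℝ^n, c_i = 0 for i ∈ [k], Σ_i c_i = 0}; V_{2,k+1} = {Σ_{k+1≤i<j≤n} (c_i + c_j) v_{{i,j}} : c ∈ ℝ^n, c_i = 0 for i ∈ [k], Σ_i c_i = 0}; and V_{3,1} = {Σ_{k+1≤i<j≤n} λ_{{i,j}} v_{{i,j}} : for every m ∈ {k+1,...,n}, Σ_{e : m ∈ e} λ_e = 0}. Then these C(k,2)+k+1+(k+1)+1 subspaces are pairwise orthogonal with respect to the standard inner product, each is invariant under the action of S_{n−k} on ℝ^E, their direct sum is all of ℝ^E, and their dimensions are: dim V_{1,e} = dim V_{1,j}' = dim V_1'' = 1, dim V_{2,j} = n−k−1 for each j ∈ [k+1], and dim V_{3,1}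 = C(n−k,2) − (n−k). -/

import Mathlib

open Finset

/-- The 2-element subsets ("edges") of `[n] = {1,…,n}`, modeled inside `ℕ`. -/
def edgesN (n : ℕ) : Finset (Finset ℕ) := (Finset.Icc 1 n).powersetCard 2

/-- `σ` belongs to the subgroup `S_{n-k} ≤ S_n` (inside `Perm ℕ`): it fixes every
element of `[k]` pointwise and every element outside `[n]`. -/
def FixPerm (n k : ℕ) (σ : Equiv.Perm ℕ) : Prop :=
  (∀ i ∈ Finset.Icc 1 k, σ i = i) ∧ (∀ i, i ∉ Finset.Icc 1 n → σ i = i)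

/-- The action of a permutation of `[n]` on an edge (2-subset) of `[n]`. -/
def permEdge (n : ℕ) (σ : Equiv.Perm ℕ) (g : ↥(edgesN n)) : ↥(edgesN n) :=
  if h : g.1.image σ ∈ edgesN n then ⟨g.1.image σ, h⟩ else g

/-- The standard basis vector `v_e` of `ℝ^{edgesN n}` (extended by `e : Finset ℕ`). -/
def vN (n : ℕ) (e : Finset ℕ) : ↥(edgesN n) → ℝ := fun g => if g.1 = e then 1 else 0

/-- `Σ_{i=k+1}^n v_{{j,i}}`. -/
noncomputable def rowSumVec (n k j : ℕ) : ↥(edgesN n) → ℝ :=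
  ∑ i ∈ Finset.Icc (k+1) n, vN n {j, i}

/-- `Σ_{k+1 ≤ i < j ≤ n} v_{{i,j}}`. -/
noncomputable def outerVec (n k : ℕ) : ↥(edgesN n) → ℝ :=
  ∑ e ∈ (Finset.Icc (k+1) n).powersetCard 2, vN n e

/-- The coefficient space `{c ∈ ℝ^n : c_i = 0 for i ∈ [k], Σ_i c_i = 0}`. -/
def Csub (n k : ℕ) : Submodule ℝ (ℕ → ℝ) where
  carrier := {c | (∀ i ∈ Finset.Icc 1 k, c i = 0) ∧ ∑ i ∈ Finset.Icc 1 n, c i = 0}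
  add_mem' := by
    rintro a b ⟨ha1, ha2⟩ ⟨hb1, hb2⟩
    exact ⟨fun i hi => by simp [ha1 i hi, hb1 i hi],
      by simp [Finset.sum_add_distrib, ha2, hb2]⟩
  zero_mem' := ⟨fun _ _ => rfl, by simp⟩
  smul_mem' := by
    rintro r a ⟨ha1, ha2⟩
    exact ⟨fun i hi => by simp [ha1 i hi],
      by simp only [Pi.smul_apply, smul_eq_mul, ← Finset.mul_sum, ha2, mul_zero]⟩

/-- The linear map `c ↦ Σ_{i=k+1}^n c_i • v_{{j,i}}`, whose image of `Csub` is `V_{2,j}`. -/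
noncomputable def Phi2 (n k j : ℕ) : (ℕ → ℝ) →ₗ[ℝ] (↥(edgesN n) → ℝ) where
  toFun c := ∑ i ∈ Finset.Icc (k+1) n, c i • vN n {j, i}
  map_add' a b := by
    simp [add_smul, Finset.sum_add_distrib]
  map_smul' r a := by
    simp only [Pi.smul_apply, smul_eq_mul, RingHom.id_apply, mul_smul]
    rw [Finset.smul_sum]

/-- The linear map `c ↦ Σ_{k+1≤i<j≤n} (c_i + c_j) • v_{{i,j}}`, whose image of `Csub`
is `V_{2,k+1}`. -/
noncomputable def Phi2' (n k : ℕ) : (ℕ → ℝ) →ₗ[ℝ] (↥(edgesN n) → ℝ) where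
  toFun c := ∑ e ∈ (Finset.Icc (k+1) n).powersetCard 2, (∑ i ∈ e, c i) • vN n e
  map_add' a b := by
    simp [Finset.sum_add_distrib, add_smul]
  map_smul' r a := by
    simp only [Pi.smul_apply, smul_eq_mul, RingHom.id_apply, ← Finset.mul_sum, mul_smul]
    rw [Finset.smul_sum]

/-- The subspace `V_{3,1}`: vectors supported on the edges inside `{k+1,…,n}` such that
for every `m ∈ {k+1,…,n}` the entries over the edges containing `m` sum to zero. -/
def V3sub (n k : ℕ) : Submodule ℝ (↥(edgesN n) → ℝ) where
  carrier := {w | (∀ g : ↥(edgesN n), ¬ g.1 ⊆ Finset.Icc (k+1) n → w g = 0) ∧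
      ∀ m ∈ Finset.Icc (k+1) n,
        ∑ g ∈ Finset.univ.filter (fun g : ↥(edgesN n) => m ∈ g.1), w g = 0}
  add_mem' := by
    rintro a b ⟨ha1, ha2⟩ ⟨hb1, hb2⟩
    exact ⟨fun g hg => by simp [ha1 g hg, hb1 g hg],
      fun m hm => by
        simp only [Pi.add_apply, Finset.sum_add_distrib, ha2 m hm, hb2 m hm, add_zero]⟩
  zero_mem' := ⟨fun _ _ => rfl, fun m hm => by simp⟩
  smul_mem' := by
    rintro r a ⟨ha1, ha2⟩
    exact ⟨fun g hg => by simp [ha1 g hg],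
      fun m hm => by simp only [Pi.smul_apply, smul_eq_mul, ← Finset.mul_sum, ha2 m hm,
        mul_zero]⟩

/-- Index type for the `C(k,2) + k + 1 + (k+1) + 1` subspaces. -/
abbrev DecompIdx (k : ℕ) :=
  ↥(edgesN k) ⊕ (↥(Finset.Icc 1 k) ⊕ (Unit ⊕ (↥(Finset.Icc 1 k) ⊕ (Unit ⊕ Unit))))

/-- The family of subspaces `V_{1,e}, V_{1,j}', V_1'', V_{2,j}, V_{2,k+1}, V_{3,1}`. -/
noncomputable def Vfam (n k : ℕ) : DecompIdx k → Submodule ℝ (↥(edgesN n) → ℝ)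
  | .inl e => Submodule.span ℝ {vN n e.1}
  | .inr (.inl j) => Submodule.span ℝ {rowSumVec n k j.1}
  | .inr (.inr (.inl _)) => Submodule.span ℝ {outerVec n k}
  | .inr (.inr (.inr (.inl j))) => Submodule.map (Phi2 n k j.1) (Csub n k)
  | .inr (.inr (.inr (.inr (.inl _)))) => Submodule.map (Phi2' n k) (Csub n k)
  | .inr (.inr (.inr (.inr (.inr _)))) => V3sub n k


section Aux

open Finset

variable {n k : ℕ}

lemma mem_edgesN {n : ℕ} {e : Finset ℕ} :
    e ∈ edgesN n ↔ e ⊆ Finset.Icc 1 n ∧ e.card = 2 := Finset.mem_powersetCard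

lemma mem_pair {a b x : ℕ} : x ∈ ({a, b} : Finset ℕ) ↔ x = a ∨ x = b := by
  simp [Finset.mem_insert]

lemma pair_mem_edgesN {a b : ℕ} (ha : a ∈ Finset.Icc 1 n) (hb : b ∈ Finset.Icc 1 n)
    (hab : a ≠ b) : ({a, b} : Finset ℕ) ∈ edgesN n := by
  refine mem_edgesN.mpr ⟨fun x hx => ?_, Finset.card_pair hab⟩
  rcases mem_pair.mp hx with rfl | rfl <;> assumption

lemma pair_right_inj {a b c : ℕ} (hb : b ≠ a) (hc : c ≠ a) :
    ({a, b} : Finset ℕ) = {a, c} ↔ b = c := by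
  constructor
  · intro h
    have : b ∈ ({a, c} : Finset ℕ) := h ▸ (mem_pair.mpr (Or.inr rfl))
    rcases mem_pair.mp this with h' | h'
    · exact absurd h' hb
    · exact h'
  · rintro rfl; rfl

lemma vN_apply {e : Finset ℕ} {g : ↥(edgesN n)} : vN n e g = if g.1 = e then 1 else 0 := rfl

lemma vN_eq_single {e : Finset ℕ} (he : e ∈ edgesN n) :
    vN n e = fun g => if g = ⟨e, he⟩ then 1 else 0 := by
  funext g
  simp only [vN_apply, Subtype.ext_iff]

lemma sum_vN_mul {e : Finset ℕ} (he : e ∈ edgesN n) (w : ↥(edgesN n) → ℝ) :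
    ∑ g, vN n e g * w g = w ⟨e, he⟩ := by
  rw [vN_eq_single he]
  simp

lemma sum_mul_vN {e : Finset ℕ} (he : e ∈ edgesN n) (w : ↥(edgesN n) → ℝ) :
    ∑ g, w g * vN n e g = w ⟨e, he⟩ := by
  rw [vN_eq_single he]
  simp

end Aux


section Formulas

open Finset

variable {n k : ℕ}

lemma Icc_one_subset (hkn : k ≤ n) : Finset.Icc 1 k ⊆ Finset.Icc 1 n := by
  apply Finset.Icc_subset_Icc_right hkn

lemma I_subset : Finset.Icc (k+1) n ⊆ Finset.Icc 1 n := by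
  apply Finset.Icc_subset_Icc_left; omega

lemma mem_I {i : ℕ} : i ∈ Finset.Icc (k+1) n ↔ k + 1 ≤ i ∧ i ≤ n := Finset.mem_Icc

lemma mem_K {i : ℕ} : i ∈ Finset.Icc 1 k ↔ 1 ≤ i ∧ i ≤ k := Finset.mem_Icc

lemma pair_jI_mem {j i : ℕ} (hj : j ∈ Finset.Icc 1 k) (hi : i ∈ Finset.Icc (k+1) n) :
    ({j, i} : Finset ℕ) ∈ edgesN n := by
  rw [mem_K] at hj; rw [mem_I] at hi
  exact pair_mem_edgesN (Finset.mem_Icc.mpr ⟨hj.1, by omega⟩)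
    (Finset.mem_Icc.mpr ⟨by omega, hi.2⟩) (by omega)

lemma rowSum_apply {j : ℕ} (g : ↥(edgesN n)) :
    rowSumVec n k j g = ∑ i ∈ Finset.Icc (k+1) n, (if g.1 = ({j, i} : Finset ℕ) then (1:ℝ) else 0) := by
  rw [rowSumVec, Finset.sum_apply]
  rfl

lemma Phi2_apply {j : ℕ} (c : ℕ → ℝ) (g : ↥(edgesN n)) :
    Phi2 n k j c g = ∑ i ∈ Finset.Icc (k+1) n, (if g.1 = ({j, i} : Finset ℕ) then c i else 0) := by
  show (∑ i ∈ Finset.Icc (k+1) n, c i • vN n {j, i}) g = _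
  rw [Finset.sum_apply]
  refine Finset.sum_congr rfl fun i _ => ?_
  simp only [Pi.smul_apply, vN_apply, smul_eq_mul, mul_ite, mul_one, mul_zero]

lemma outer_apply (g : ↥(edgesN n)) :
    outerVec n k g = if g.1 ⊆ Finset.Icc (k+1) n then 1 else 0 := by
  rw [outerVec, Finset.sum_apply]
  simp only [vN_apply]
  rw [Finset.sum_ite_eq ((Finset.Icc (k+1) n).powersetCard 2) g.1 (fun _ => (1:ℝ))]
  congr 1
  rw [Finset.mem_powersetCard]
  have h2 : g.1.card = 2 := (mem_edgesN.mp g.2).2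
  simp [h2, eq_iff_iff]

lemma Phi2'_apply (c : ℕ → ℝ) (g : ↥(edgesN n)) :
    Phi2' n k c g = if g.1 ⊆ Finset.Icc (k+1) n then ∑ i ∈ g.1, c i else 0 := by
  show (∑ e ∈ (Finset.Icc (k+1) n).powersetCard 2, (∑ i ∈ e, c i) • vN n e) g = _
  rw [Finset.sum_apply]
  simp only [Pi.smul_apply, vN_apply, smul_eq_mul, mul_ite, mul_one, mul_zero]
  rw [Finset.sum_ite_eq ((Finset.Icc (k+1) n).powersetCard 2) g.1 (fun e => ∑ i ∈ e, c i)]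
  congr 1
  rw [Finset.mem_powersetCard]
  have h2 : g.1.card = 2 := (mem_edgesN.mp g.2).2
  simp [h2, eq_iff_iff]

/-- support lemmas -/
lemma rowSum_supp {j : ℕ} {g : ↥(edgesN n)}
    (h : ¬ ∃ i ∈ Finset.Icc (k+1) n, g.1 = ({j, i} : Finset ℕ)) : rowSumVec n k j g = 0 := by
  rw [rowSum_apply]
  refine Finset.sum_eq_zero fun i hi => ?_
  rw [if_neg fun he => h ⟨i, hi, he⟩]

lemma Phi2_supp {j : ℕ} {c : ℕ → ℝ} {g : ↥(edgesN n)}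
    (h : ¬ ∃ i ∈ Finset.Icc (k+1) n, g.1 = ({j, i} : Finset ℕ)) : Phi2 n k j c g = 0 := by
  rw [Phi2_apply]
  refine Finset.sum_eq_zero fun i hi => ?_
  rw [if_neg fun he => h ⟨i, hi, he⟩]

lemma outer_supp {g : ↥(edgesN n)} (h : ¬ g.1 ⊆ Finset.Icc (k+1) n) : outerVec n k g = 0 := by
  rw [outer_apply, if_neg h]

lemma Phi2'_supp {c : ℕ → ℝ} {g : ↥(edgesN n)} (h : ¬ g.1 ⊆ Finset.Icc (k+1) n) :
    Phi2' n k c g = 0 := by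
  rw [Phi2'_apply, if_neg h]

lemma csub_sum_I {c : ℕ → ℝ} (hc : c ∈ Csub n k) (hkn : k ≤ n) :
    ∑ i ∈ Finset.Icc (k+1) n, c i = 0 := by
  obtain ⟨h1, h2⟩ := hc
  have e1 : Finset.Icc 1 k = Finset.Ioc 0 k := by rw [← Finset.Icc_add_one_left_eq_Ioc, zero_add]
  have e2 : Finset.Icc (k+1) n = Finset.Ioc k n := by rw [← Finset.Icc_add_one_left_eq_Ioc]
  have e3 : Finset.Icc 1 n = Finset.Ioc 0 n := by rw [← Finset.Icc_add_one_left_eq_Ioc, zero_add]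
  have hsplit := Finset.sum_Ioc_consecutive (fun i => c i) (Nat.zero_le k) hkn
  have hk0 : ∑ i ∈ Finset.Ioc 0 k, c i = 0 := by
    rw [← e1]; exact Finset.sum_eq_zero h1
  rw [e2]
  rw [e3] at h2
  rw [hk0, zero_add] at hsplit
  rw [hsplit, h2]

end Formulas

section Vsum

open Finset

variable {n k : ℕ}

/-- The vertex-sum functional. -/
noncomputable def vsumL (n m : ℕ) : (↥(edgesN n) → ℝ) →ₗ[ℝ] ℝ where
  toFun w := ∑ g ∈ Finset.univ.filter (fun g : ↥(edgesN n) => m ∈ g.1), w g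
  map_add' a b := by simp [Finset.sum_add_distrib]
  map_smul' r a := by simp [Finset.mul_sum]

lemma vsumL_apply (m : ℕ) (w : ↥(edgesN n) → ℝ) :
    vsumL n m w = ∑ g ∈ Finset.univ.filter (fun g : ↥(edgesN n) => m ∈ g.1), w g := rfl

lemma vsumL_vN {e : Finset ℕ} (he : e ∈ edgesN n) (m : ℕ) :
    vsumL n m (vN n e) = if m ∈ e then 1 else 0 := by
  rw [vsumL_apply, vN_eq_single he]
  rw [Finset.sum_ite_eq' (Finset.univ.filter (fun g : ↥(edgesN n) => m ∈ g.1)) ⟨e, he⟩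
    (fun _ => (1:ℝ))]
  simp

/-- The edges inside `I` containing `m` biject with `I.erase m`. -/
lemma filter_pair {m : ℕ} (hm : m ∈ Finset.Icc (k+1) n) :
    ((Finset.Icc (k+1) n).powersetCard 2).filter (fun e => m ∈ e)
      = ((Finset.Icc (k+1) n).erase m).image (fun j => ({m, j} : Finset ℕ)) := by
  ext e
  simp only [Finset.mem_filter, Finset.mem_powersetCard, Finset.mem_image, Finset.mem_erase]
  constructor
  · rintro ⟨⟨hsub, hcard⟩, hme⟩
    have h1 : (e.erase m).card = 1 := by
      rw [Finset.card_erase_of_mem hme, hcard]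
    obtain ⟨j, hj⟩ := Finset.card_eq_one.mp h1
    have hjm : j ∈ e.erase m := hj ▸ Finset.mem_singleton_self j
    refine ⟨j, ⟨(Finset.mem_erase.mp hjm).1, hsub (Finset.mem_of_mem_erase hjm)⟩, ?_⟩
    rw [← Finset.insert_erase hme, hj]
  · rintro ⟨j, ⟨hjm, hjI⟩, rfl⟩
    refine ⟨⟨?_, Finset.card_pair (Ne.symm hjm)⟩, mem_pair.mpr (Or.inl rfl)⟩
    intro x hx
    rcases mem_pair.mp hx with rfl | rfl <;> assumption

lemma sum_pairs_mem {m : ℕ} (hm : m ∈ Finset.Icc (k+1) n) (f : Finset ℕ → ℝ) :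
    ∑ e ∈ ((Finset.Icc (k+1) n).powersetCard 2).filter (fun e => m ∈ e), f e
      = ∑ j ∈ (Finset.Icc (k+1) n).erase m, f {m, j} := by
  rw [filter_pair hm, Finset.sum_image]
  intro a ha b hb hab
  exact (pair_right_inj (Finset.mem_erase.mp ha).1 (Finset.mem_erase.mp hb).1).mp hab

lemma vsumL_sum_edges (m : ℕ) (f : Finset ℕ → ℝ) :
    vsumL n m (∑ e ∈ (Finset.Icc (k+1) n).powersetCard 2, f e • vN n e)
      = ∑ e ∈ ((Finset.Icc (k+1) n).powersetCard 2).filter (fun e => m ∈ e), f e := by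
  rw [map_sum]
  rw [Finset.sum_filter]
  refine Finset.sum_congr rfl fun e he => ?_
  have heN : e ∈ edgesN n := by
    rw [Finset.mem_powersetCard] at he
    exact mem_edgesN.mpr ⟨he.1.trans I_subset, he.2⟩
  rw [map_smul, vsumL_vN heN, smul_eq_mul]
  split <;> ring

lemma vsumL_outer {m : ℕ} :
    vsumL n m (outerVec n k)
      = ((((Finset.Icc (k+1) n).powersetCard 2).filter (fun e => m ∈ e)).card : ℝ) := by
  have : outerVec n k = ∑ e ∈ (Finset.Icc (k+1) n).powersetCard 2, (1:ℝ) • vN n e := by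
    rw [outerVec]; simp
  rw [this, vsumL_sum_edges]
  simp

lemma vsumL_Phi2' {m : ℕ} (hm : m ∈ Finset.Icc (k+1) n) (c : ℕ → ℝ) :
    vsumL n m (Phi2' n k c) = ∑ j ∈ (Finset.Icc (k+1) n).erase m, (c m + c j) := by
  have : Phi2' n k c = ∑ e ∈ (Finset.Icc (k+1) n).powersetCard 2, (∑ i ∈ e, c i) • vN n e := rfl
  rw [this, vsumL_sum_edges, sum_pairs_mem hm]
  refine Finset.sum_congr rfl fun j hj => ?_
  rw [Finset.sum_pair (Ne.symm (Finset.mem_erase.mp hj).1)]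

lemma card_filter_pair {m : ℕ} (hm : m ∈ Finset.Icc (k+1) n) :
    (((Finset.Icc (k+1) n).powersetCard 2).filter (fun e => m ∈ e)).card = n - k - 1 := by
  have hinj : Set.InjOn (fun j => ({m, j} : Finset ℕ)) ((Finset.Icc (k+1) n).erase m) := by
    intro a ha b hb hab
    exact (pair_right_inj (Finset.mem_erase.mp ha).1 (Finset.mem_erase.mp hb).1).mp hab
  rw [filter_pair hm, Finset.card_image_of_injOn hinj, Finset.card_erase_of_mem hm,
    Nat.card_Icc]
  omega

end Vsum


section Orth

open Finset

variable {n k : ℕ}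

lemma Phi2_pair {j i : ℕ} (hj : j ∈ Finset.Icc 1 k) (hi : i ∈ Finset.Icc (k+1) n) (c : ℕ → ℝ) :
    Phi2 n k j c ⟨{j, i}, pair_jI_mem hj hi⟩ = c i := by
  rw [Phi2_apply]
  rw [Finset.sum_eq_single_of_mem i hi]
  · rw [if_pos rfl]
  · intro i' hi' hne
    rw [if_neg]
    intro h
    rw [mem_K] at hj; rw [mem_I] at hi; rw [mem_I] at hi'
    exact hne ((pair_right_inj (by omega) (by omega)).mp h).symm

lemma orth_row_V2 {j : ℕ} (hj : j ∈ Finset.Icc 1 k) {c : ℕ → ℝ} (hc : c ∈ Csub n k)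
    (hkn : k ≤ n) : ∑ g, rowSumVec n k j g * Phi2 n k j c g = 0 := by
  have h1 : ∀ g : ↥(edgesN n), rowSumVec n k j g * Phi2 n k j c g
      = ∑ i ∈ Finset.Icc (k+1) n, vN n {j, i} g * Phi2 n k j c g := by
    intro g
    rw [rowSumVec, Finset.sum_apply, Finset.sum_mul]
  simp only [h1]
  rw [Finset.sum_comm]
  have h2 : ∀ i ∈ Finset.Icc (k+1) n,
      ∑ g, vN n {j, i} g * Phi2 n k j c g = c i := by
    intro i hi
    rw [sum_vN_mul (pair_jI_mem hj hi), Phi2_pair hj hi]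
  rw [Finset.sum_congr rfl h2]
  exact csub_sum_I hc hkn

lemma sum_filter_outer (f : Finset ℕ → ℝ) :
    ∑ g ∈ Finset.univ.filter (fun g : ↥(edgesN n) => g.1 ⊆ Finset.Icc (k+1) n), f g.1
      = ∑ e ∈ (Finset.Icc (k+1) n).powersetCard 2, f e := by
  apply Finset.sum_bij (fun (g : ↥(edgesN n)) _ => g.1)
  · intro g hg
    rw [Finset.mem_filter] at hg
    exact Finset.mem_powersetCard.mpr ⟨hg.2, (mem_edgesN.mp g.2).2⟩
  · intro a ha b hb hab
    exact Subtype.ext hab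
  · intro e he
    rw [Finset.mem_powersetCard] at he
    have heN : e ∈ edgesN n := mem_edgesN.mpr ⟨he.1.trans I_subset, he.2⟩
    exact ⟨⟨e, heN⟩, Finset.mem_filter.mpr ⟨Finset.mem_univ _, he.1⟩, rfl⟩
  · intro g hg
    rfl

lemma orth_outer_Phi2' {c : ℕ → ℝ} (hc : c ∈ Csub n k) (hkn : k ≤ n) :
    ∑ g, outerVec n k g * Phi2' n k c g = 0 := by
  have h1 : ∀ g : ↥(edgesN n), outerVec n k g * Phi2' n k c g
      = if g.1 ⊆ Finset.Icc (k+1) n then ∑ i ∈ g.1, c i else 0 := by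
    intro g
    rw [outer_apply, Phi2'_apply]
    split <;> simp
  simp only [h1]
  rw [← Finset.sum_filter]
  have h2 : ∀ g ∈ Finset.univ.filter (fun g : ↥(edgesN n) => g.1 ⊆ Finset.Icc (k+1) n),
      ∑ i ∈ g.1, c i = (fun e => ∑ i ∈ e, c i) g.1 := fun g _ => rfl
  rw [Finset.sum_congr rfl h2, sum_filter_outer (fun e => ∑ i ∈ e, c i)]
  have h3 : ∀ e ∈ (Finset.Icc (k+1) n).powersetCard 2,
      ∑ i ∈ e, c i = ∑ i ∈ Finset.Icc (k+1) n, (if i ∈ e then c i else 0) := by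
    intro e he
    rw [Finset.sum_ite_mem,
      Finset.inter_eq_right.mpr (Finset.mem_powersetCard.mp he).1]
  rw [Finset.sum_congr rfl h3, Finset.sum_comm]
  have h5 : ∀ i ∈ Finset.Icc (k+1) n,
      ∑ e ∈ (Finset.Icc (k+1) n).powersetCard 2, (if i ∈ e then c i else 0)
        = (((Finset.Icc (k+1) n).card - 1 : ℕ) : ℝ) * c i := by
    intro i hi
    rw [← Finset.sum_filter, sum_pairs_mem hi (fun _ => c i), Finset.sum_const,
      nsmul_eq_mul, Finset.card_erase_of_mem hi]
  rw [Finset.sum_congr rfl h5, ← Finset.mul_sum, csub_sum_I hc hkn, mul_zero]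

lemma V3_sum_outer {w : ↥(edgesN n) → ℝ} (hw : w ∈ V3sub n k) :
    ∑ g ∈ Finset.univ.filter (fun g : ↥(edgesN n) => g.1 ⊆ Finset.Icc (k+1) n), w g = 0 := by
  obtain ⟨hsupp, hvs⟩ := hw
  have key : ∑ m ∈ Finset.Icc (k+1) n,
      ∑ g ∈ Finset.univ.filter (fun g : ↥(edgesN n) => m ∈ g.1), w g = 0 :=
    Finset.sum_eq_zero hvs
  simp only [Finset.sum_filter] at key
  rw [Finset.sum_comm] at key
  have key2 : ∀ g : ↥(edgesN n), ∑ m ∈ Finset.Icc (k+1) n, (if m ∈ g.1 then w g else 0)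
      = (if g.1 ⊆ Finset.Icc (k+1) n then 2 * w g else 0) := by
    intro g
    rw [Finset.sum_ite_mem, Finset.sum_const, nsmul_eq_mul]
    by_cases h : g.1 ⊆ Finset.Icc (k+1) n
    · rw [if_pos h, Finset.inter_eq_right.mpr h, (mem_edgesN.mp g.2).2]
      norm_num
    · rw [if_neg h, hsupp g h, mul_zero]
  simp only [key2] at key
  rw [← Finset.sum_filter, ← Finset.mul_sum] at key
  linarith

lemma orth_outer_V3 {w : ↥(edgesN n) → ℝ} (hw : w ∈ V3sub n k) :
    ∑ g, outerVec n k g * w g = 0 := by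
  have h1 : ∀ g : ↥(edgesN n), outerVec n k g * w g
      = if g.1 ⊆ Finset.Icc (k+1) n then w g else 0 := by
    intro g
    rw [outer_apply]
    split <;> simp
  simp only [h1]
  rw [← Finset.sum_filter]
  exact V3_sum_outer hw

lemma orth_Phi2'_V3 {c : ℕ → ℝ} {w : ↥(edgesN n) → ℝ} (hw : w ∈ V3sub n k) :
    ∑ g, Phi2' n k c g * w g = 0 := by
  have h1 : ∀ g : ↥(edgesN n), Phi2' n k c g * w g
      = if g.1 ⊆ Finset.Icc (k+1) n
          then ∑ i ∈ Finset.Icc (k+1) n, (if i ∈ g.1 then c i * w g else 0) else 0 := by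
    intro g
    rw [Phi2'_apply]
    by_cases h : g.1 ⊆ Finset.Icc (k+1) n
    · rw [if_pos h, if_pos h, Finset.sum_ite_mem, Finset.inter_eq_right.mpr h,
        Finset.sum_mul]
    · rw [if_neg h, if_neg h, zero_mul]
  simp only [h1]
  rw [← Finset.sum_filter, Finset.sum_comm]
  apply Finset.sum_eq_zero
  intro i hi
  rw [← Finset.sum_filter, Finset.filter_filter]
  have hsub : Finset.univ.filter (fun g : ↥(edgesN n) =>
      g.1 ⊆ Finset.Icc (k+1) n ∧ i ∈ g.1) ⊆ Finset.univ.filter (fun g : ↥(edgesN n) => i ∈ g.1) := by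
    intro g hg
    rw [Finset.mem_filter] at hg ⊢
    exact ⟨hg.1, hg.2.2⟩
  have hvan : ∀ g ∈ Finset.univ.filter (fun g : ↥(edgesN n) => i ∈ g.1),
      g ∉ Finset.univ.filter (fun g : ↥(edgesN n) =>
        g.1 ⊆ Finset.Icc (k+1) n ∧ i ∈ g.1) → c i * w g = 0 := by
    intro g hg hng
    rw [Finset.mem_filter] at hg hng
    push_neg at hng
    have : ¬ g.1 ⊆ Finset.Icc (k+1) n := fun hs => hng hg.1 hs hg.2
    rw [hw.1 g this, mul_zero]
  rw [Finset.sum_subset hsub hvan, ← Finset.mul_sum, hw.2 i hi, mul_zero]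

end Orth


section MainOrth

open Finset

variable {n k : ℕ}

/-- Support labels. -/
def SuppLab (n k : ℕ) : (Finset ℕ ⊕ ℕ ⊕ Unit) → ↥(edgesN n) → Prop
  | .inl e => fun g => g.1 = e
  | .inr (.inl j) => fun g => ∃ i ∈ Finset.Icc (k+1) n, g.1 = ({j, i} : Finset ℕ)
  | .inr (.inr _) => fun g => g.1 ⊆ Finset.Icc (k+1) n

def lab (k : ℕ) : DecompIdx k → (Finset ℕ ⊕ ℕ ⊕ Unit)
  | .inl e => .inl e.1
  | .inr (.inl j) => .inr (.inl j.1)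
  | .inr (.inr (.inl _)) => .inr (.inr ())
  | .inr (.inr (.inr (.inl j))) => .inr (.inl j.1)
  | .inr (.inr (.inr (.inr _))) => .inr (.inr ())

def ValidLab (k : ℕ) : (Finset ℕ ⊕ ℕ ⊕ Unit) → Prop
  | .inl e => e ∈ edgesN k
  | .inr (.inl j) => j ∈ Finset.Icc 1 k
  | .inr (.inr _) => True

lemma lab_valid (i : DecompIdx k) : ValidLab k (lab k i) := by
  rcases i with e | j | u | j | u | u
  exacts [e.2, j.2, trivial, j.2, trivial, trivial]

lemma edge_of_edgesK {e : Finset ℕ} (he : e ∈ edgesN k) :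
    e ⊆ Finset.Icc 1 k ∧ e.card = 2 := mem_edgesN.mp he

lemma supp_disj {l l' : Finset ℕ ⊕ ℕ ⊕ Unit} (hl : ValidLab k l) (hl' : ValidLab k l')
    (hne : l ≠ l') (g : ↥(edgesN n)) : ¬ (SuppLab n k l g ∧ SuppLab n k l' g) := by
  have AR : ∀ e j, e ∈ edgesN k → j ∈ Finset.Icc 1 k →
      ¬ (g.1 = e ∧ ∃ i ∈ Finset.Icc (k+1) n, g.1 = ({j, i} : Finset ℕ)) := by
    rintro e j he hj ⟨rfl, i, hi, hpair⟩
    have : i ∈ g.1 := hpair ▸ mem_pair.mpr (Or.inr rfl)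
    have h1 := (edge_of_edgesK he).1 this
    rw [mem_K] at h1; rw [mem_I] at hi; omega
  have AO : ∀ e, e ∈ edgesN k → ¬ (g.1 = e ∧ g.1 ⊆ Finset.Icc (k+1) n) := by
    rintro e he ⟨rfl, hsub⟩
    obtain ⟨hsubK, hcard⟩ := edge_of_edgesK he
    have hne' : g.1.Nonempty := Finset.card_pos.mp (by omega)
    obtain ⟨x, hx⟩ := hne'
    have h1 := hsubK hx
    have h2 := hsub hx
    rw [mem_K] at h1; rw [mem_I] at h2; omega
  have RO : ∀ j, j ∈ Finset.Icc 1 k →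
      ¬ ((∃ i ∈ Finset.Icc (k+1) n, g.1 = ({j, i} : Finset ℕ)) ∧
        g.1 ⊆ Finset.Icc (k+1) n) := by
    rintro j hj ⟨⟨i, hi, hpair⟩, hsub⟩
    have : j ∈ g.1 := hpair ▸ mem_pair.mpr (Or.inl rfl)
    have h2 := hsub this
    rw [mem_K] at hj; rw [mem_I] at h2; omega
  rcases l with e | j | u <;> rcases l' with e' | j' | u'
  · rintro ⟨h1, h2⟩
    simp only [SuppLab] at h1 h2
    exact hne (by rw [← h1, ← h2])
  · exact AR e j' hl hl'
  · exact AO e hl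
  · rintro ⟨h1, h2⟩
    simp only [SuppLab] at h1 h2
    exact AR e' j hl' hl ⟨h2, h1⟩
  · rintro ⟨h1, h2⟩
    simp only [SuppLab] at h1 h2
    simp only [ValidLab] at hl hl'
    obtain ⟨i, hi, hpi⟩ := h1
    obtain ⟨i', hi', hpi'⟩ := h2
    have hj' : j' ∈ g.1 := hpi' ▸ mem_pair.mpr (Or.inl rfl)
    rw [hpi] at hj'
    rcases mem_pair.mp hj' with h | h
    · exact hne (by rw [h])
    · rw [mem_K] at hl hl'; rw [mem_I] at hi; omega
  · exact RO j hl
  · rintro ⟨h1, h2⟩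
    simp only [SuppLab] at h1 h2
    exact AO e' hl' ⟨h2, h1⟩
  · rintro ⟨h1, h2⟩
    simp only [SuppLab] at h1 h2
    exact RO j' hl' ⟨h2, h1⟩
  · exact absurd rfl hne

lemma supp_mem (i : DecompIdx k) (v : ↥(edgesN n) → ℝ) (hv : v ∈ Vfam n k i)
    (g : ↥(edgesN n)) (hg : ¬ SuppLab n k (lab k i) g) : v g = 0 := by
  rcases i with e | j | u | j | u | u
  · obtain ⟨r, rfl⟩ := Submodule.mem_span_singleton.mp hv
    simp only [lab, SuppLab] at hg
    simp only [Pi.smul_apply, vN_apply, if_neg hg, smul_zero]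
  · obtain ⟨r, rfl⟩ := Submodule.mem_span_singleton.mp hv
    simp only [lab, SuppLab] at hg
    simp only [Pi.smul_apply, rowSum_supp hg, smul_zero]
  · obtain ⟨r, rfl⟩ := Submodule.mem_span_singleton.mp hv
    simp only [lab, SuppLab] at hg
    simp only [Pi.smul_apply, outer_supp hg, smul_zero]
  · obtain ⟨c, hc, rfl⟩ := hv
    simp only [lab, SuppLab] at hg
    exact Phi2_supp hg
  · obtain ⟨c, hc, rfl⟩ := hv
    simp only [lab, SuppLab] at hg
    exact Phi2'_supp hg
  · exact hv.1 g hg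

lemma sum_comm_mul (v w : ↥(edgesN n) → ℝ) :
    (∑ g, v g * w g) = ∑ g, w g * v g :=
  Finset.sum_congr rfl fun g _ => mul_comm _ _

lemma orth_main (hkn : k ≤ n) :
    ∀ i j : DecompIdx k, i ≠ j →
      ∀ v ∈ Vfam n k i, ∀ w ∈ Vfam n k j, ∑ g, v g * w g = 0 := by
  have generic : ∀ i j : DecompIdx k, lab k i ≠ lab k j →
      ∀ v ∈ Vfam n k i, ∀ w ∈ Vfam n k j, ∑ g, v g * w g = 0 := by
    intro i j hl v hv w hw
    apply Finset.sum_eq_zero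
    intro g _
    by_cases h1 : SuppLab n k (lab k i) g
    · have h2 : ¬ SuppLab n k (lab k j) g := fun h2 =>
        supp_disj (lab_valid i) (lab_valid j) hl g ⟨h1, h2⟩
      rw [supp_mem j w hw g h2, mul_zero]
    · rw [supp_mem i v hv g h1, zero_mul]
  intro i j hij v hv w hw
  by_cases hl : lab k i = lab k j
  · -- same-label pairs: explicit computations
    have scal : ∀ (r : ℝ) (u w : ↥(edgesN n) → ℝ),
        (∑ g, (r • u) g * w g) = r * ∑ g, u g * w g := by
      intro r u w
      rw [Finset.mul_sum]
      exact Finset.sum_congr rfl fun g _ => by simp [mul_assoc]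
    rcases i with e | a | u | a | u | u <;> rcases j with e' | b | u' | b | u' | u' <;>
      simp only [lab, Sum.inl.injEq, Sum.inr.injEq, reduceCtorEq] at hl
    -- (A, A)
    · exact absurd (congrArg Sum.inl (Subtype.ext hl)) hij
    -- (R, R)
    · exact absurd (congrArg (fun x => Sum.inr (Sum.inl x)) (Subtype.ext hl)) hij
    -- (R, R2)
    · obtain ⟨r, rfl⟩ := Submodule.mem_span_singleton.mp hv
      obtain ⟨c, hc, rfl⟩ := hw
      rw [scal, hl, orth_row_V2 b.2 hc hkn, mul_zero]
    -- (O1, O1)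
    · cases u; cases u'; exact absurd rfl hij
    -- (O1, V2')
    · obtain ⟨r, rfl⟩ := Submodule.mem_span_singleton.mp hv
      obtain ⟨c, hc, rfl⟩ := hw
      rw [scal, orth_outer_Phi2' hc hkn, mul_zero]
    -- (O1, V3)
    · obtain ⟨r, rfl⟩ := Submodule.mem_span_singleton.mp hv
      rw [scal, orth_outer_V3 hw, mul_zero]
    -- (R2, R)
    · obtain ⟨c, hc, rfl⟩ := hv
      obtain ⟨r, rfl⟩ := Submodule.mem_span_singleton.mp hw
      rw [sum_comm_mul, scal, ← hl, orth_row_V2 a.2 hc hkn, mul_zero]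
    -- (R2, R2)
    · exact absurd (congrArg (fun x => Sum.inr (Sum.inr (Sum.inr (Sum.inl x))))
        (Subtype.ext hl)) hij
    -- (V2', O1)
    · obtain ⟨c, hc, rfl⟩ := hv
      obtain ⟨r, rfl⟩ := Submodule.mem_span_singleton.mp hw
      rw [sum_comm_mul, scal, orth_outer_Phi2' hc hkn, mul_zero]
    -- (V2', V2')
    · cases u; cases u'; exact absurd rfl hij
    -- (V2', V3)
    · obtain ⟨c, hc, rfl⟩ := hv
      exact orth_Phi2'_V3 hw
    -- (V3, O1)
    · obtain ⟨r, rfl⟩ := Submodule.mem_span_singleton.mp hw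
      rw [sum_comm_mul, scal, orth_outer_V3 hv, mul_zero]
    -- (V3, V2')
    · obtain ⟨c, hc, rfl⟩ := hw
      rw [sum_comm_mul]
      exact orth_Phi2'_V3 hv
    -- (V3, V3)
    · cases u; cases u'; exact absurd rfl hij
  · exact generic i j hl v hv w hw

end MainOrth


section Invar

open Finset

variable {n k : ℕ} {σ : Equiv.Perm ℕ}

lemma FixPerm.inv (h : FixPerm n k σ) : FixPerm n k σ⁻¹ := by
  refine ⟨fun i hi => ?_, fun i hi => ?_⟩
  · conv_lhs => rw [← h.1 i hi]
    simp
  · conv_lhs => rw [← h.2 i hi]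
    simp

lemma fix_maps_Icc (h : FixPerm n k σ) {i : ℕ} (hi : i ∈ Finset.Icc 1 n) :
    σ i ∈ Finset.Icc 1 n := by
  by_contra hni
  have h1 : σ (σ i) = σ i := h.2 (σ i) hni
  have h2 : σ i = i := σ.injective h1
  rw [h2] at hni
  exact hni hi

lemma fix_maps_I (h : FixPerm n k σ) {i : ℕ} (hi : i ∈ Finset.Icc (k+1) n) :
    σ i ∈ Finset.Icc (k+1) n := by
  have h1 : σ i ∈ Finset.Icc 1 n := fix_maps_Icc h (I_subset hi)
  rw [mem_I] at hi ⊢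
  rw [Finset.mem_Icc] at h1
  rcases Nat.lt_or_ge k (σ i) with hlt | hle
  · omega
  · exfalso
    have : σ (σ i) = σ i := h.1 (σ i) (Finset.mem_Icc.mpr ⟨h1.1, hle⟩)
    have h2 : σ i = i := σ.injective this
    omega

lemma permEdge_coe (h : FixPerm n k σ) (g : ↥(edgesN n)) :
    (permEdge n σ g).1 = g.1.image σ := by
  have hmem : g.1.image σ ∈ edgesN n := by
    obtain ⟨hsub, hcard⟩ := mem_edgesN.mp g.2
    refine mem_edgesN.mpr ⟨?_, ?_⟩
    · intro x hx
      obtain ⟨y, hy, rfl⟩ := Finset.mem_image.mp hx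
      exact fix_maps_Icc h (hsub hy)
    · rw [Finset.card_image_of_injective _ σ.injective, hcard]
  rw [permEdge, dif_pos hmem]

lemma image_image_inv (σ : Equiv.Perm ℕ) (s : Finset ℕ) : (s.image σ).image ⇑σ⁻¹ = s := by
  rw [Finset.image_image]
  have : (⇑σ⁻¹ ∘ ⇑σ) = id := by
    funext x; simp
  rw [this, Finset.image_id]

lemma image_inv_image (σ : Equiv.Perm ℕ) (s : Finset ℕ) : (s.image ⇑σ⁻¹).image ⇑σ = s := by
  have := image_image_inv σ⁻¹ s
  simpa using this

lemma image_eq_iff {σ : Equiv.Perm ℕ} {s e : Finset ℕ} :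
    s.image ⇑σ = e ↔ s = e.image ⇑σ⁻¹ := by
  constructor
  · rintro rfl
    rw [image_image_inv]
  · rintro rfl
    rw [image_inv_image]

lemma image_fix {f : ℕ → ℕ} {s : Finset ℕ} (hfix : ∀ x ∈ s, f x = x) : s.image f = s := by
  rw [Finset.image_congr (g := id) (fun x hx => hfix x hx), Finset.image_id]

lemma subset_I_iff (h : FixPerm n k σ) (g : ↥(edgesN n)) :
    g.1.image σ ⊆ Finset.Icc (k+1) n ↔ g.1 ⊆ Finset.Icc (k+1) n := by
  constructor
  · intro hs x hx
    have h1 : σ x ∈ Finset.Icc (k+1) n := hs (Finset.mem_image_of_mem _ hx)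
    have h2 := fix_maps_I h.inv h1
    simpa using h2
  · intro hs x hx
    obtain ⟨y, hy, rfl⟩ := Finset.mem_image.mp hx
    exact fix_maps_I h (hs hy)

lemma csub_comp {c : ℕ → ℝ} (hc : c ∈ Csub n k) (h : FixPerm n k σ) :
    (fun x => c (σ x)) ∈ Csub n k := by
  refine ⟨fun i hi => ?_, ?_⟩
  · show c (σ i) = 0
    rw [h.1 i hi]
    exact hc.1 i hi
  · rw [Finset.sum_equiv (σ : ℕ ≃ ℕ)
      (fun i => ⟨fun hi => fix_maps_Icc h hi, fun hi => by simpa using fix_maps_Icc h.inv hi⟩)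
      (fun i _ => rfl)]
    exact hc.2

/-- The permutation of the coefficient index `i ∈ I` under `σ⁻¹`. -/
lemma sum_I_equiv (h : FixPerm n k σ) (f : ℕ → ℝ) :
    ∑ i ∈ Finset.Icc (k+1) n, f (σ⁻¹ i) = ∑ i ∈ Finset.Icc (k+1) n, f i := by
  refine Finset.sum_equiv (σ⁻¹ : Equiv.Perm ℕ)
    (fun i => ⟨fun hi => fix_maps_I h.inv hi, fun hi => by simpa using fix_maps_I h hi⟩)
    (fun i _ => rfl)

lemma permEdge_pair (h : FixPerm n k σ) {j : ℕ} (hj : j ∈ Finset.Icc 1 k)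
    (g : ↥(edgesN n)) (i : ℕ) :
    ((permEdge n σ g).1 = ({j, i} : Finset ℕ)) ↔ (g.1 = ({j, σ⁻¹ i} : Finset ℕ)) := by
  rw [permEdge_coe h, image_eq_iff]
  have : ({j, i} : Finset ℕ).image ⇑σ⁻¹ = {j, σ⁻¹ i} := by
    rw [Finset.image_insert, Finset.image_singleton, h.inv.1 j hj]
  rw [this]

lemma rowSum_perm (h : FixPerm n k σ) {j : ℕ} (hj : j ∈ Finset.Icc 1 k) :
    (fun g => rowSumVec n k j (permEdge n σ g)) = rowSumVec n k j := by
  funext g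
  rw [rowSum_apply, rowSum_apply]
  refine Finset.sum_equiv (σ⁻¹ : Equiv.Perm ℕ)
    (fun i => ⟨fun hi => fix_maps_I h.inv hi, fun hi => by simpa using fix_maps_I h hi⟩)
    (fun i _ => ?_)
  exact if_congr (permEdge_pair h hj g i) rfl rfl

lemma Phi2_perm (h : FixPerm n k σ) {j : ℕ} (hj : j ∈ Finset.Icc 1 k) (c : ℕ → ℝ) :
    (fun g => Phi2 n k j c (permEdge n σ g)) = Phi2 n k j (fun x => c (σ x)) := by
  funext g
  rw [Phi2_apply, Phi2_apply]
  refine Finset.sum_equiv (σ⁻¹ : Equiv.Perm ℕ)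
    (fun i => ⟨fun hi => fix_maps_I h.inv hi, fun hi => by simpa using fix_maps_I h hi⟩)
    (fun i _ => ?_)
  simp only [show σ (σ⁻¹ i) = i from σ.apply_symm_apply i]
  exact if_congr (permEdge_pair h hj g i) rfl rfl

lemma outer_perm (h : FixPerm n k σ) :
    (fun g => outerVec n k (permEdge n σ g)) = outerVec n k := by
  funext g
  rw [outer_apply, outer_apply, permEdge_coe h]
  exact if_congr (subset_I_iff h g) rfl rfl

lemma Phi2'_perm (h : FixPerm n k σ) (c : ℕ → ℝ) :
    (fun g => Phi2' n k c (permEdge n σ g)) = Phi2' n k (fun x => c (σ x)) := by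
  funext g
  rw [Phi2'_apply, Phi2'_apply, permEdge_coe h]
  by_cases hs : g.1 ⊆ Finset.Icc (k+1) n
  · rw [if_pos ((subset_I_iff h g).mpr hs), if_pos hs]
    rw [Finset.sum_image (fun a _ b _ hab => σ.injective hab)]
  · rw [if_neg (fun hh => hs ((subset_I_iff h g).mp hh)), if_neg hs]

/-- `permEdge` as a bijection of edges. -/
lemma permEdge_inv (h : FixPerm n k σ) (g : ↥(edgesN n)) :
    permEdge n σ⁻¹ (permEdge n σ g) = g := by
  apply Subtype.ext
  rw [permEdge_coe h.inv, permEdge_coe h, image_image_inv]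

lemma permEdge_inv' (h : FixPerm n k σ) (g : ↥(edgesN n)) :
    permEdge n σ (permEdge n σ⁻¹ g) = g := by
  have := permEdge_inv (σ := σ⁻¹) h.inv g
  simpa using this

noncomputable def permEquiv (n : ℕ) (σ : Equiv.Perm ℕ) (h : FixPerm n k σ) :
    ↥(edgesN n) ≃ ↥(edgesN n) where
  toFun := permEdge n σ
  invFun := permEdge n σ⁻¹
  left_inv := permEdge_inv h
  right_inv := permEdge_inv' h

lemma V3_perm (h : FixPerm n k σ) {w : ↥(edgesN n) → ℝ} (hw : w ∈ V3sub n k) :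
    (fun g => w (permEdge n σ g)) ∈ V3sub n k := by
  refine ⟨fun g hg => ?_, fun m hm => ?_⟩
  · apply hw.1
    rw [permEdge_coe h]
    exact fun hh => hg ((subset_I_iff h g).mp hh)
  · have key : ∑ g ∈ Finset.univ.filter (fun g : ↥(edgesN n) => m ∈ g.1), w (permEdge n σ g)
        = ∑ g ∈ Finset.univ.filter (fun g : ↥(edgesN n) => σ m ∈ g.1), w g := by
      refine Finset.sum_equiv (permEquiv n σ h) (fun g => ?_) (fun g _ => rfl)
      simp only [Finset.mem_filter, Finset.mem_univ, true_and]
      show m ∈ g.1 ↔ σ m ∈ (permEdge n σ g).1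
      rw [permEdge_coe h]
      constructor
      · intro hm'
        exact Finset.mem_image_of_mem _ hm'
      · intro hm'
        obtain ⟨y, hy, hyx⟩ := Finset.mem_image.mp hm'
        rwa [σ.injective hyx] at hy
    rw [key]
    exact hw.2 (σ m) (fix_maps_I h hm)

lemma invar_main (h : FixPerm n k σ) :
    ∀ i : DecompIdx k, ∀ w ∈ Vfam n k i, (fun g => w (permEdge n σ g)) ∈ Vfam n k i := by
  rintro (e | j | u | j | u | u) w hw
  · obtain ⟨r, rfl⟩ := Submodule.mem_span_singleton.mp hw
    have he : ∀ x ∈ e.1, (⇑σ⁻¹) x = x := by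
      intro x hx
      exact h.inv.1 x ((edge_of_edgesK e.2).1 hx)
    have hfun : (fun g => (r • vN n e.1) (permEdge n σ g)) = r • vN n e.1 := by
      funext g
      simp only [Pi.smul_apply, vN_apply, smul_eq_mul, permEdge_coe h]
      have hiff : (g.1.image ⇑σ = e.1) ↔ (g.1 = e.1) := by
        rw [image_eq_iff, image_fix he]
      exact congrArg (r * ·) (if_congr hiff rfl rfl)
    rw [hfun]
    exact Submodule.smul_mem _ r (Submodule.mem_span_singleton_self _)
  · obtain ⟨r, rfl⟩ := Submodule.mem_span_singleton.mp hw
    have hfun : (fun g => (r • rowSumVec n k j.1) (permEdge n σ g))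
        = r • rowSumVec n k j.1 := by
      funext g
      simp only [Pi.smul_apply]
      rw [show rowSumVec n k j.1 (permEdge n σ g) = rowSumVec n k j.1 g from
        congrFun (rowSum_perm h j.2) g]
    rw [hfun]
    exact Submodule.smul_mem _ r (Submodule.mem_span_singleton_self _)
  · obtain ⟨r, rfl⟩ := Submodule.mem_span_singleton.mp hw
    have hfun : (fun g => (r • outerVec n k) (permEdge n σ g)) = r • outerVec n k := by
      funext g
      simp only [Pi.smul_apply]
      rw [show outerVec n k (permEdge n σ g) = outerVec n k g from
        congrFun (outer_perm h) g]
    rw [hfun]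
    exact Submodule.smul_mem _ r (Submodule.mem_span_singleton_self _)
  · obtain ⟨c, hc, rfl⟩ := hw
    exact ⟨fun x => c (σ x), csub_comp hc h, (Phi2_perm h j.2 c).symm⟩
  · obtain ⟨c, hc, rfl⟩ := hw
    exact ⟨fun x => c (σ x), csub_comp hc h, (Phi2'_perm h c).symm⟩
  · exact V3_perm h hw

end Invar


section Span

open Finset

variable {n k : ℕ}

lemma card_I (hkn : k ≤ n) : (Finset.Icc (k+1) n).card = n - k := by
  rw [Nat.card_Icc]; omega

lemma mem_case1 {e : Finset ℕ} (he : e ∈ edgesN k) : vN n e ∈ iSup (Vfam n k) :=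
  le_iSup (Vfam n k) (.inl ⟨e, he⟩) (Submodule.mem_span_singleton_self _)

lemma mem_case2 (hn : k + 4 ≤ n) {j i : ℕ} (hj : j ∈ Finset.Icc 1 k)
    (hi : i ∈ Finset.Icc (k+1) n) : vN n {j, i} ∈ iSup (Vfam n k) := by
  set M : ℝ := ((n - k : ℕ) : ℝ) with hM
  have hM4 : (4:ℝ) ≤ M := by
    rw [hM]; exact_mod_cast (by omega : (4:ℕ) ≤ n - k)
  have hM0 : M ≠ 0 := by linarith
  set c : ℕ → ℝ :=
    fun z => (if z = i then 1 else 0) - (if z ∈ Finset.Icc (k+1) n then 1/M else 0) with hc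
  have hcC : c ∈ Csub n k := by
    refine ⟨fun z hz => ?_, ?_⟩
    · rw [mem_K] at hz
      have h1 : z ≠ i := by rw [mem_I] at hi; omega
      have h2 : z ∉ Finset.Icc (k+1) n := by rw [mem_I]; omega
      simp only [hc]
      rw [if_neg h1, if_neg h2]
      ring
    · have e1 : ∑ z ∈ Finset.Icc 1 n, (if z = i then (1:ℝ) else 0) = 1 := by
        rw [Finset.sum_ite_eq' (Finset.Icc 1 n) i (fun _ => (1:ℝ)), if_pos (I_subset hi)]
      have e2 : ∑ z ∈ Finset.Icc 1 n, (if z ∈ Finset.Icc (k+1) n then 1/M else 0)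
          = ((n - k : ℕ) : ℝ) * (1/M) := by
        rw [Finset.sum_ite_mem, Finset.inter_eq_right.mpr I_subset, Finset.sum_const,
          card_I (by omega : k ≤ n), nsmul_eq_mul]
      simp only [hc, Finset.sum_sub_distrib]
      rw [e1, e2, ← hM]
      field_simp
      norm_num
  have key : vN n {j, i} = Phi2 n k j c + (1/M) • rowSumVec n k j := by
    funext g
    rw [Pi.add_apply, Pi.smul_apply, Phi2_apply, rowSum_apply, smul_eq_mul,
      Finset.mul_sum, ← Finset.sum_add_distrib]
    have hterm : ∀ x ∈ Finset.Icc (k+1) n,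
        (if g.1 = ({j, x} : Finset ℕ) then c x else 0)
          + 1/M * (if g.1 = ({j, x} : Finset ℕ) then 1 else 0)
        = (if g.1 = ({j, x} : Finset ℕ) then (if x = i then (1:ℝ) else 0) else 0) := by
      intro x hx
      by_cases hgx : g.1 = ({j, x} : Finset ℕ)
      · rw [if_pos hgx, if_pos hgx, if_pos hgx]
        simp only [hc]
        rw [if_pos hx]
        ring
      · rw [if_neg hgx, if_neg hgx, if_neg hgx]; ring
    rw [Finset.sum_congr rfl hterm]
    have hside : ∀ x ∈ Finset.Icc (k+1) n, x ≠ i →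
        (if g.1 = ({j, x} : Finset ℕ) then (if x = i then (1:ℝ) else 0) else 0) = 0 := by
      intro x _ hne
      rw [if_neg hne]
      exact ite_self 0
    rw [Finset.sum_eq_single_of_mem i hi hside, if_pos rfl, vN_apply]
  rw [key]
  have h1 : Phi2 n k j c ∈ Vfam n k (.inr (.inr (.inr (.inl ⟨j, hj⟩)))) := ⟨c, hcC, rfl⟩
  have h2 : rowSumVec n k j ∈ Vfam n k (.inr (.inl ⟨j, hj⟩)) :=
    Submodule.mem_span_singleton_self _
  exact Submodule.add_mem _ (le_iSup (Vfam n k) _ h1)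
    (Submodule.smul_mem _ _ (le_iSup (Vfam n k) _ h2))

lemma mem_case3 (hn : k + 4 ≤ n) {a b : ℕ} (ha : a ∈ Finset.Icc (k+1) n)
    (hb : b ∈ Finset.Icc (k+1) n) (hab : a ≠ b) : vN n {a, b} ∈ iSup (Vfam n k) := by
  set M : ℝ := ((n - k : ℕ) : ℝ) with hM
  have hM4 : (4:ℝ) ≤ M := by
    rw [hM]; exact_mod_cast (by omega : (4:ℕ) ≤ n - k)
  have hM0 : M ≠ 0 := by linarith
  have hM1 : M - 1 ≠ 0 := by linarith
  have hM2 : M - 2 ≠ 0 := by linarith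
  have habN : ({a, b} : Finset ℕ) ∈ edgesN n :=
    pair_mem_edgesN (I_subset ha) (I_subset hb) hab
  set x : ℝ := 1/(M-2) with hxd
  set y : ℝ := -2/(M*(M-2)) with hyd
  set al : ℝ := 2/(M*(M-1)) with hald
  set c : ℕ → ℝ := fun z => (if z = a then x else 0) + (if z = b then x else 0)
    + (if z ∈ Finset.Icc (k+1) n then y else 0) with hc
  have hcast : ((n - k - 1 : ℕ) : ℝ) = M - 1 := by
    rw [hM]
    have h1 : (1:ℕ) ≤ n - k := by omega
    push_cast [Nat.cast_sub h1]
    ring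
  have csum : ∀ s : Finset ℕ, a ∈ s → b ∈ s → Finset.Icc (k+1) n ⊆ s →
      ∑ z ∈ s, c z = x + x + M * y := by
    intro s hsa hsb hIs
    simp only [hc, Finset.sum_add_distrib]
    rw [Finset.sum_ite_eq' s a (fun _ => x), if_pos hsa,
      Finset.sum_ite_eq' s b (fun _ => x), if_pos hsb,
      Finset.sum_ite_mem, Finset.inter_eq_right.mpr hIs, Finset.sum_const,
      card_I (by omega : k ≤ n), nsmul_eq_mul, ← hM]
  have hS0 : x + x + M * y = 0 := by
    rw [hxd, hyd]
    field_simp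
    ring
  have hcC : c ∈ Csub n k := by
    refine ⟨fun z hz => ?_, ?_⟩
    · rw [mem_K] at hz
      rw [mem_I] at ha hb
      have h1 : z ≠ a := by omega
      have h2 : z ≠ b := by omega
      have h3 : z ∉ Finset.Icc (k+1) n := by rw [mem_I]; omega
      simp only [hc]
      rw [if_neg h1, if_neg h2, if_neg h3]
      ring
    · rw [csum _ (I_subset ha) (I_subset hb) I_subset, hS0]
  set w : ↥(edgesN n) → ℝ := vN n {a, b} - al • outerVec n k - Phi2' n k c with hwd
  have hwV3 : w ∈ V3sub n k := by
    constructor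
    · intro g hg
      have h1 : vN n {a, b} g = 0 := by
        rw [vN_apply, if_neg]
        intro hh
        apply hg
        rw [hh]
        intro z hz
        rcases mem_pair.mp hz with rfl | rfl <;> assumption
      simp only [hwd, Pi.sub_apply, Pi.smul_apply, h1, outer_supp hg, Phi2'_supp hg]
      simp
    · intro m hm
      have hv : ∑ g ∈ Finset.univ.filter (fun g : ↥(edgesN n) => m ∈ g.1), w g
          = vsumL n m w := rfl
      rw [hv, hwd, map_sub, map_sub, map_smul, vsumL_vN habN, vsumL_outer,
        card_filter_pair hm, vsumL_Phi2' hm]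
      have hinner : ∑ j ∈ (Finset.Icc (k+1) n).erase m, (c m + c j)
          = (M - 1) * c m + (0 - c m) := by
        rw [Finset.sum_add_distrib, Finset.sum_const, nsmul_eq_mul,
          Finset.card_erase_of_mem hm, card_I (by omega : k ≤ n), hcast,
          Finset.sum_erase_eq_sub hm, csum _ ha hb (subset_refl _), hS0]
      rw [hinner, hcast]
      have hcm : c m = (if m = a then x else 0) + (if m = b then x else 0) + y := by
        simp only [hc]
        rw [if_pos hm]
      by_cases hma : m = a
      · have hmab : m ∈ ({a, b} : Finset ℕ) := mem_pair.mpr (Or.inl hma)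
        rw [if_pos hmab, hcm, if_pos hma, if_neg (by rw [hma]; exact hab), smul_eq_mul]
        simp only [hxd, hyd, hald]
        field_simp
        ring
      · by_cases hmb : m = b
        · have hmab : m ∈ ({a, b} : Finset ℕ) := mem_pair.mpr (Or.inr hmb)
          rw [if_pos hmab, hcm, if_neg hma, if_pos hmb, smul_eq_mul]
          simp only [hxd, hyd, hald]
          field_simp
          ring
        · have hmab : m ∉ ({a, b} : Finset ℕ) := by
            intro hh; rcases mem_pair.mp hh with h | h; exacts [hma h, hmb h]
          rw [if_neg hmab, hcm, if_neg hma, if_neg hmb, smul_eq_mul]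
          simp only [hxd, hyd, hald]
          field_simp
          ring
  have key : vN n {a, b} = al • outerVec n k + Phi2' n k c + w := by
    rw [hwd]
    funext g
    simp only [Pi.add_apply, Pi.sub_apply, Pi.smul_apply]
    ring
  rw [key]
  have h1 : al • outerVec n k ∈ Vfam n k (.inr (.inr (.inl ()))) :=
    Submodule.smul_mem _ _ (Submodule.mem_span_singleton_self _)
  have h2 : Phi2' n k c ∈ Vfam n k (.inr (.inr (.inr (.inr (.inl ()))))) := ⟨c, hcC, rfl⟩
  have h3 : w ∈ Vfam n k (.inr (.inr (.inr (.inr (.inr ()))))) := hwV3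
  exact Submodule.add_mem _ (Submodule.add_mem _ (le_iSup (Vfam n k) _ h1)
    (le_iSup (Vfam n k) _ h2)) (le_iSup (Vfam n k) _ h3)

lemma vN_mem_iSup (hn : k + 4 ≤ n) (g : ↥(edgesN n)) : vN n g.1 ∈ iSup (Vfam n k) := by
  obtain ⟨hsub, hcard⟩ := mem_edgesN.mp g.2
  obtain ⟨a, b, hab, hpair⟩ := Finset.card_eq_two.mp hcard
  have haM : a ∈ Finset.Icc 1 n := hsub (by rw [hpair]; exact mem_pair.mpr (Or.inl rfl))
  have hbM : b ∈ Finset.Icc 1 n := hsub (by rw [hpair]; exact mem_pair.mpr (Or.inr rfl))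
  rw [Finset.mem_Icc] at haM hbM
  rw [hpair]
  rcases le_or_gt a k with hak | hak <;> rcases le_or_gt b k with hbk | hbk
  · exact mem_case1 (pair_mem_edgesN (Finset.mem_Icc.mpr ⟨haM.1, hak⟩)
      (Finset.mem_Icc.mpr ⟨hbM.1, hbk⟩) hab)
  · exact mem_case2 hn (Finset.mem_Icc.mpr ⟨haM.1, hak⟩)
      (Finset.mem_Icc.mpr ⟨hbk, hbM.2⟩)
  · rw [Finset.pair_comm]
    exact mem_case2 hn (Finset.mem_Icc.mpr ⟨hbM.1, hbk⟩)
      (Finset.mem_Icc.mpr ⟨hak, haM.2⟩)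
  · exact mem_case3 hn (Finset.mem_Icc.mpr ⟨hak, haM.2⟩)
      (Finset.mem_Icc.mpr ⟨hbk, hbM.2⟩) hab

lemma iSup_Vfam_eq_top (hn : k + 4 ≤ n) : iSup (Vfam n k) = ⊤ := by
  rw [eq_top_iff]
  intro v _
  have hv : v = ∑ g : ↥(edgesN n), v g • vN n g.1 := by
    funext g'
    rw [Finset.sum_apply]
    have hterm : ∀ g : ↥(edgesN n), (v g • vN n g.1) g' = if g' = g then v g else 0 := by
      intro g
      simp only [Pi.smul_apply, vN_apply, smul_eq_mul, Subtype.ext_iff]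
      split <;> ring
    rw [Finset.sum_congr rfl (fun g _ => hterm g)]
    simp
  rw [hv]
  exact Submodule.sum_mem _ fun g _ => Submodule.smul_mem _ _ (vN_mem_iSup hn g)

end Span


section Dim1

open Finset Module

variable {n k : ℕ}

lemma edgesK_subset (hkn : k ≤ n) {e : Finset ℕ} (he : e ∈ edgesN k) : e ∈ edgesN n := by
  obtain ⟨h1, h2⟩ := mem_edgesN.mp he
  exact mem_edgesN.mpr ⟨h1.trans (Icc_one_subset hkn), h2⟩

lemma vN_ne_zero {e : Finset ℕ} (he : e ∈ edgesN n) : vN n e ≠ 0 := by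
  intro h
  have := congrFun h ⟨e, he⟩
  rw [vN_apply, if_pos rfl] at this
  simp at this

lemma rowSum_ne_zero (hn : k + 4 ≤ n) {j : ℕ} (hj : j ∈ Finset.Icc 1 k) :
    rowSumVec n k j ≠ 0 := by
  intro h
  have hk1 : k + 1 ∈ Finset.Icc (k+1) n := by rw [mem_I]; omega
  have hedge := pair_jI_mem hj hk1
  have := congrFun h ⟨{j, k+1}, hedge⟩
  rw [rowSum_apply] at this
  have hside : ∀ z ∈ Finset.Icc (k+1) n, z ≠ k + 1 →
      (if (⟨({j, k+1} : Finset ℕ), hedge⟩ : ↥(edgesN n)).1 = ({j, z} : Finset ℕ)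
        then (1:ℝ) else 0) = 0 := by
    intro z hz hne
    rw [if_neg]
    intro hh
    rw [mem_K] at hj; rw [mem_I] at hz
    exact hne ((pair_right_inj (by omega) (by omega)).mp hh).symm
  rw [Finset.sum_eq_single_of_mem (k+1) hk1 hside, if_pos rfl] at this
  simp at this

lemma outer_ne_zero (hn : k + 4 ≤ n) : outerVec n k ≠ (0 : ↥(edgesN n) → ℝ) := by
  intro h
  have h1 : (k+1) ∈ Finset.Icc (k+1) n := by rw [mem_I]; omega
  have h2 : (k+2) ∈ Finset.Icc (k+1) n := by rw [mem_I]; omega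
  have hedge : ({k+1, k+2} : Finset ℕ) ∈ edgesN n :=
    pair_mem_edgesN (I_subset h1) (I_subset h2) (by omega)
  have := congrFun h ⟨{k+1, k+2}, hedge⟩
  rw [outer_apply, if_pos] at this
  · simp at this
  · intro z hz
    rcases mem_pair.mp hz with rfl | rfl <;> assumption

/-- Generic linear independence via evaluation points. -/
lemma linearIndependent_of_eval {ι : Type} [Fintype ι] [DecidableEq ι]
    (u : ι → ↥(edgesN n) → ℝ) (pt : ι → ↥(edgesN n))
    (h : ∀ idx idx', u idx' (pt idx) = if idx = idx' then 1 else 0) :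
    LinearIndependent ℝ u := by
  rw [Fintype.linearIndependent_iff]
  intro g hg idx
  have h2 := congrFun hg (pt idx)
  rw [Finset.sum_apply, Pi.zero_apply] at h2
  simp only [Pi.smul_apply, smul_eq_mul, h idx, mul_ite, mul_one, mul_zero] at h2
  rwa [Finset.sum_ite_eq Finset.univ idx g, if_pos (Finset.mem_univ idx)] at h2

def deltaC (nn i : ℕ) : ℕ → ℝ :=
  fun z => (if z = i then 1 else 0) - (if z = nn then 1 else 0)

lemma deltaC_mem (hn : k + 4 ≤ n) {i : ℕ} (hi : i ∈ Finset.Icc (k+1) (n-1)) :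
    deltaC n i ∈ Csub n k := by
  rw [Finset.mem_Icc] at hi
  refine ⟨fun z hz => ?_, ?_⟩
  · rw [mem_K] at hz
    have h1 : z ≠ i := by omega
    have h2 : z ≠ n := by omega
    simp only [deltaC]
    rw [if_neg h1, if_neg h2]
    ring
  · simp only [deltaC, Finset.sum_sub_distrib]
    rw [Finset.sum_ite_eq' (Finset.Icc 1 n) i (fun _ => (1:ℝ)),
      Finset.sum_ite_eq' (Finset.Icc 1 n) n (fun _ => (1:ℝ)),
      if_pos (by rw [Finset.mem_Icc]; omega : i ∈ Finset.Icc 1 n),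
      if_pos (by rw [Finset.mem_Icc]; omega : n ∈ Finset.Icc 1 n)]
    ring

lemma sum_pair_indicator {j i : ℕ} (hi : i ∈ Finset.Icc (k+1) n) (g : ↥(edgesN n)) :
    ∑ z ∈ Finset.Icc (k+1) n,
        (if g.1 = ({j, z} : Finset ℕ) then (if z = i then (1:ℝ) else 0) else 0)
      = if g.1 = ({j, i} : Finset ℕ) then 1 else 0 := by
  have hside : ∀ z ∈ Finset.Icc (k+1) n, z ≠ i →
      (if g.1 = ({j, z} : Finset ℕ) then (if z = i then (1:ℝ) else 0) else 0) = 0 := by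
    intro z _ hz
    rw [if_neg hz]
    exact ite_self 0
  rw [Finset.sum_eq_single_of_mem i hi hside]
  by_cases h : g.1 = ({j, i} : Finset ℕ) <;> simp [h]

lemma I_insert (hn : k + 1 ≤ n) :
    Finset.Icc (k+1) n = insert n (Finset.Icc (k+1) (n-1)) := by
  ext z
  rw [Finset.mem_insert, Finset.mem_Icc, Finset.mem_Icc]
  omega

lemma n_not_mem_J : n ∉ Finset.Icc (k+1) (n-1) := by
  rw [Finset.mem_Icc]; omega

lemma Phi2_deltaC (hn : k + 4 ≤ n) {j i : ℕ} (hj : j ∈ Finset.Icc 1 k)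
    (hi : i ∈ Finset.Icc (k+1) (n-1)) :
    Phi2 n k j (deltaC n i) = vN n {j, i} - vN n {j, n} := by
  have hiI : i ∈ Finset.Icc (k+1) n := by
    rw [Finset.mem_Icc] at hi ⊢; omega
  have hnI : n ∈ Finset.Icc (k+1) n := by rw [Finset.mem_Icc]; omega
  funext g
  rw [Pi.sub_apply, Phi2_apply]
  have hsplit : ∀ z ∈ Finset.Icc (k+1) n,
      (if g.1 = ({j, z} : Finset ℕ) then deltaC n i z else 0)
        = (if g.1 = ({j, z} : Finset ℕ) then (if z = i then (1:ℝ) else 0) else 0)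
          - (if g.1 = ({j, z} : Finset ℕ) then (if z = n then (1:ℝ) else 0) else 0) := by
    intro z _
    by_cases h : g.1 = ({j, z} : Finset ℕ) <;> simp [h, deltaC]
  rw [Finset.sum_congr rfl hsplit, Finset.sum_sub_distrib, sum_pair_indicator hiI g,
    sum_pair_indicator hnI g, vN_apply, vN_apply]

lemma Phi2_vanish {j : ℕ} {c : ℕ → ℝ} (hzero : ∀ z ∈ Finset.Icc (k+1) n, c z = 0) :
    Phi2 n k j c = 0 := by
  funext g
  rw [Phi2_apply, Pi.zero_apply]
  refine Finset.sum_eq_zero fun z hz => ?_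
  rw [hzero z hz]
  exact ite_self 0

lemma Phi2'_vanish {c : ℕ → ℝ} (hzero : ∀ z ∈ Finset.Icc (k+1) n, c z = 0) :
    Phi2' n k c = 0 := by
  funext g
  rw [Phi2'_apply, Pi.zero_apply]
  by_cases h : g.1 ⊆ Finset.Icc (k+1) n
  · rw [if_pos h]
    exact Finset.sum_eq_zero fun z hz => hzero z (h hz)
  · rw [if_neg h]

lemma c'_vanish (hn : k + 4 ≤ n) {c : ℕ → ℝ} (hc : c ∈ Csub n k) :
    ∀ z ∈ Finset.Icc (k+1) n,
      c z - ∑ i ∈ Finset.Icc (k+1) (n-1), c i * deltaC n i z = 0 := by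
  intro z hz
  have hsum : ∑ i ∈ Finset.Icc (k+1) (n-1), c i * deltaC n i z
      = (if z ∈ Finset.Icc (k+1) (n-1) then c z else 0)
        - (if z = n then ∑ i ∈ Finset.Icc (k+1) (n-1), c i else 0) := by
    have hterm : ∀ i ∈ Finset.Icc (k+1) (n-1), c i * deltaC n i z
        = (if z = i then c i else 0) - (if z = n then c i else 0) := by
      intro i hi
      have hin : i ≠ n := by rw [Finset.mem_Icc] at hi; omega
      simp only [deltaC]
      by_cases h1 : z = i <;> by_cases h2 : z = n <;> simp [h1, h2, hin, Ne.symm hin]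
    rw [Finset.sum_congr rfl hterm, Finset.sum_sub_distrib,
      Finset.sum_ite_eq (Finset.Icc (k+1) (n-1)) z c]
    congr 1
    by_cases h2 : z = n <;> simp [h2]
  by_cases hzn : z = n
  · have hznJ : z ∉ Finset.Icc (k+1) (n-1) := by rw [Finset.mem_Icc]; omega
    rw [hsum, if_neg hznJ, if_pos hzn]
    have hIsum : ∑ i ∈ Finset.Icc (k+1) n, c i = 0 := csub_sum_I hc (by omega)
    rw [I_insert (by omega), Finset.sum_insert n_not_mem_J] at hIsum
    rw [hzn]
    linarith
  · have hzJ : z ∈ Finset.Icc (k+1) (n-1) := by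
      rw [mem_I] at hz; rw [Finset.mem_Icc]; omega
    rw [hsum, if_pos hzJ, if_neg hzn]
    ring

lemma V2j_eq_span (hn : k + 4 ≤ n) {j : ℕ} (hj : j ∈ Finset.Icc 1 k) :
    Submodule.map (Phi2 n k j) (Csub n k)
      = Submodule.span ℝ (Set.range
          (fun i : ↥(Finset.Icc (k+1) (n-1)) => vN n {j, i.1} - vN n {j, n})) := by
  apply le_antisymm
  · rintro _ ⟨c, hc, rfl⟩
    have h0 : Phi2 n k j (c - ∑ i ∈ Finset.Icc (k+1) (n-1), c i • deltaC n i) = 0 := by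
      apply Phi2_vanish
      intro z hz
      have := c'_vanish hn hc z hz
      simp only [Pi.sub_apply, Finset.sum_apply, Pi.smul_apply, smul_eq_mul]
      exact this
    rw [map_sub, map_sum] at h0
    simp only [map_smul] at h0
    have hd : Phi2 n k j c
        = ∑ i ∈ Finset.Icc (k+1) (n-1), c i • Phi2 n k j (deltaC n i) :=
      eq_of_sub_eq_zero h0
    rw [hd]
    apply Submodule.sum_mem
    intro i hi
    apply Submodule.smul_mem
    apply Submodule.subset_span
    exact ⟨⟨i, hi⟩, (Phi2_deltaC hn hj hi).symm⟩
  · rw [Submodule.span_le]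
    rintro _ ⟨i, rfl⟩
    exact ⟨deltaC n i.1, deltaC_mem hn i.2, Phi2_deltaC hn hj i.2⟩

lemma V2j_indep (hn : k + 4 ≤ n) {j : ℕ} (hj : j ∈ Finset.Icc 1 k) :
    LinearIndependent ℝ
      (fun i : ↥(Finset.Icc (k+1) (n-1)) => vN n {j, i.1} - vN n {j, n}) := by
  have hJI : ∀ i : ↥(Finset.Icc (k+1) (n-1)), i.1 ∈ Finset.Icc (k+1) n := by
    intro i
    have := i.2
    rw [Finset.mem_Icc] at this ⊢
    omega
  apply linearIndependent_of_eval _ (fun i => ⟨{j, i.1}, pair_jI_mem hj (hJI i)⟩)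
  intro idx idx'
  have hii : idx.1 ∈ Finset.Icc (k+1) n := hJI idx
  have hii' : idx'.1 ∈ Finset.Icc (k+1) n := hJI idx'
  rw [mem_K] at hj; rw [mem_I] at hii hii'
  have hidxn : idx.1 ≠ n := by
    have := idx.2; rw [Finset.mem_Icc] at this; omega
  simp only [Pi.sub_apply, vN_apply]
  have h2 : (({j, idx.1} : Finset ℕ) = {j, n}) = False := by
    simp only [eq_iff_iff, iff_false]
    intro hh
    exact hidxn ((pair_right_inj (by omega) (by omega)).mp hh)
  by_cases h : idx = idx'
  · subst h
    rw [if_pos rfl, if_pos rfl]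
    rw [if_neg (by simp [h2])]
    ring
  · have hne : idx.1 ≠ idx'.1 := fun hh => h (Subtype.ext hh)
    rw [if_neg h, if_neg, if_neg (by simp [h2])]
    · ring
    · intro hh
      exact hne ((pair_right_inj (by omega) (by omega)).mp hh)

lemma V2j_rank (hn : k + 4 ≤ n) {j : ℕ} (hj : j ∈ Finset.Icc 1 k) :
    finrank ℝ ↥(Submodule.map (Phi2 n k j) (Csub n k)) = n - k - 1 := by
  rw [V2j_eq_span hn hj, finrank_span_eq_card (V2j_indep hn hj), Fintype.card_coe,
    Nat.card_Icc]
  omega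

end Dim1


section Dim2

open Finset Module

variable {n k : ℕ}

lemma J_mem_I {i : ℕ} (hi : i ∈ Finset.Icc (k+1) (n-1)) : i ∈ Finset.Icc (k+1) n := by
  rw [Finset.mem_Icc] at hi ⊢; omega

lemma V2'_eq_span (hn : k + 4 ≤ n) :
    Submodule.map (Phi2' n k) (Csub n k)
      = Submodule.span ℝ (Set.range
          (fun i : ↥(Finset.Icc (k+1) (n-1)) => Phi2' n k (deltaC n i.1))) := by
  apply le_antisymm
  · rintro _ ⟨c, hc, rfl⟩
    have h0 : Phi2' n k (c - ∑ i ∈ Finset.Icc (k+1) (n-1), c i • deltaC n i) = 0 := by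
      apply Phi2'_vanish
      intro z hz
      have := c'_vanish hn hc z hz
      simp only [Pi.sub_apply, Finset.sum_apply, Pi.smul_apply, smul_eq_mul]
      exact this
    rw [map_sub, map_sum] at h0
    simp only [map_smul] at h0
    have hd : Phi2' n k c
        = ∑ i ∈ Finset.Icc (k+1) (n-1), c i • Phi2' n k (deltaC n i) :=
      eq_of_sub_eq_zero h0
    rw [hd]
    apply Submodule.sum_mem
    intro i hi
    apply Submodule.smul_mem
    exact Submodule.subset_span ⟨⟨i, hi⟩, rfl⟩
  · rw [Submodule.span_le]
    rintro _ ⟨i, rfl⟩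
    exact ⟨deltaC n i.1, deltaC_mem hn i.2, rfl⟩

lemma V2'_indep (hn : k + 4 ≤ n) :
    LinearIndependent ℝ
      (fun i : ↥(Finset.Icc (k+1) (n-1)) => Phi2' n k (deltaC n i.1)) := by
  rw [Fintype.linearIndependent_iff]
  intro g hg idx
  set C : ℕ → ℝ := ∑ i : ↥(Finset.Icc (k+1) (n-1)), g i • deltaC n i.1 with hC
  have hPhiC : Phi2' n k C = 0 := by
    rw [hC, map_sum]
    simp only [map_smul]
    exact hg
  have hedgeq : ∀ p q : ℕ, p ∈ Finset.Icc (k+1) n → q ∈ Finset.Icc (k+1) n → p ≠ q →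
      C p + C q = 0 := by
    intro p q hp hq hpq
    have hpq_edge : ({p, q} : Finset ℕ) ∈ edgesN n :=
      pair_mem_edgesN (I_subset hp) (I_subset hq) hpq
    have hsub : ({p, q} : Finset ℕ) ⊆ Finset.Icc (k+1) n := by
      intro z hz; rcases mem_pair.mp hz with rfl | rfl <;> assumption
    have h2 := congrFun hPhiC ⟨{p, q}, hpq_edge⟩
    rwa [Phi2'_apply, if_pos hsub, Finset.sum_pair hpq, Pi.zero_apply] at h2
  have hCzero : ∀ z ∈ Finset.Icc (k+1) n, C z = 0 := by
    intro z hz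
    have h1 : (k+1) ∈ Finset.Icc (k+1) n := by rw [mem_I]; omega
    have h2 : (k+2) ∈ Finset.Icc (k+1) n := by rw [mem_I]; omega
    have h3 : (k+3) ∈ Finset.Icc (k+1) n := by rw [mem_I]; omega
    by_cases hz1 : z = k+1
    · have e1 := hedgeq z (k+2) hz h2 (by omega)
      have e2 := hedgeq z (k+3) hz h3 (by omega)
      have e3 := hedgeq (k+2) (k+3) h2 h3 (by omega)
      linarith
    · by_cases hz2 : z = k+2
      · have e1 := hedgeq z (k+1) hz h1 (by omega)
        have e2 := hedgeq z (k+3) hz h3 (by omega)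
        have e3 := hedgeq (k+1) (k+3) h1 h3 (by omega)
        linarith
      · have e1 := hedgeq z (k+1) hz h1 (by omega)
        have e2 := hedgeq z (k+2) hz h2 (by omega)
        have e3 := hedgeq (k+1) (k+2) h1 h2 (by omega)
        linarith
  have hidxn : idx.1 ≠ n := by
    have := idx.2; rw [Finset.mem_Icc] at this; omega
  have hval : C idx.1 = g idx := by
    rw [hC, Finset.sum_apply]
    simp only [Pi.smul_apply, smul_eq_mul, deltaC]
    have hterm : ∀ i : ↥(Finset.Icc (k+1) (n-1)), i ∈ Finset.univ →
        g i * ((if idx.1 = i.1 then (1:ℝ) else 0) - (if idx.1 = n then 1 else 0))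
          = if i = idx then g i else 0 := by
      intro i _
      rw [if_neg hidxn]
      by_cases h : i = idx
      · subst h; rw [if_pos rfl, if_pos rfl]; ring
      · rw [if_neg (fun hh => h (Subtype.ext hh.symm)), if_neg h]; ring
    rw [Finset.sum_congr rfl hterm, Finset.sum_ite_eq' Finset.univ idx g,
      if_pos (Finset.mem_univ idx)]
  have hz := hCzero idx.1 (J_mem_I idx.2)
  rw [hval] at hz
  exact hz

lemma V2'_rank (hn : k + 4 ≤ n) :
    finrank ℝ ↥(Submodule.map (Phi2' n k) (Csub n k)) = n - k - 1 := by
  rw [V2'_eq_span hn, finrank_span_eq_card (V2'_indep hn), Fintype.card_coe,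
    Nat.card_Icc]
  omega

end Dim2


section Dim3

open Finset Module

variable {n k : ℕ}

/-- The subspace of vectors supported on edges inside `{k+1,…,n}`. -/
def Usub (n k : ℕ) : Submodule ℝ (↥(edgesN n) → ℝ) where
  carrier := {w | ∀ g : ↥(edgesN n), ¬ g.1 ⊆ Finset.Icc (k+1) n → w g = 0}
  add_mem' := by
    rintro a b ha hb g hg
    simp [ha g hg, hb g hg]
  zero_mem' := fun _ _ => rfl
  smul_mem' := by
    rintro r a ha g hg
    simp [ha g hg]

/-- The vertex-sum linear map into `ℝ^I`. -/
noncomputable def Lmap (n k : ℕ) : (↥(edgesN n) → ℝ) →ₗ[ℝ] (↥(Finset.Icc (k+1) n) → ℝ) where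
  toFun w := fun m => vsumL n m.1 w
  map_add' a b := by funext m; simp
  map_smul' r a := by funext m; simp

lemma V3_eq_map :
    Submodule.map (Usub n k).subtype
      (LinearMap.ker ((Lmap n k).domRestrict (Usub n k))) = V3sub n k := by
  ext w
  constructor
  · rintro ⟨⟨u, hu⟩, hker, rfl⟩
    have hker' : (Lmap n k).domRestrict (Usub n k) ⟨u, hu⟩ = 0 := hker
    refine ⟨hu, fun m hm => ?_⟩
    have h2 := congrFun hker' ⟨m, hm⟩
    exact h2
  · intro hw
    refine ⟨⟨w, hw.1⟩, ?_, rfl⟩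
    show (Lmap n k).domRestrict (Usub n k) ⟨w, hw.1⟩ = 0
    funext m
    exact hw.2 m.1 m.2

lemma Usub_eq_span :
    Usub n k = Submodule.span ℝ (Set.range
      (fun e : ↥((Finset.Icc (k+1) n).powersetCard 2) => vN n e.1)) := by
  apply le_antisymm
  · intro w hw
    have hrep : w = ∑ g ∈ Finset.univ.filter
        (fun g : ↥(edgesN n) => g.1 ⊆ Finset.Icc (k+1) n), w g • vN n g.1 := by
      funext g'
      rw [Finset.sum_apply]
      have hterm : ∀ g : ↥(edgesN n), (w g • vN n g.1) g' = if g' = g then w g else 0 := by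
        intro g
        simp only [Pi.smul_apply, vN_apply, smul_eq_mul, Subtype.ext_iff]
        split <;> ring
      rw [Finset.sum_congr rfl (fun g _ => hterm g),
        Finset.sum_ite_eq (Finset.univ.filter
          (fun g : ↥(edgesN n) => g.1 ⊆ Finset.Icc (k+1) n)) g' w]
      by_cases h : g'.1 ⊆ Finset.Icc (k+1) n
      · rw [if_pos (show g' ∈ Finset.univ.filter
          (fun g : ↥(edgesN n) => g.1 ⊆ Finset.Icc (k+1) n) from
            Finset.mem_filter.mpr ⟨Finset.mem_univ _, h⟩)]
      · rw [if_neg (show g' ∉ Finset.univ.filter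
          (fun g : ↥(edgesN n) => g.1 ⊆ Finset.Icc (k+1) n) from
            fun hh => h (Finset.mem_filter.mp hh).2), hw g' h]
    rw [hrep]
    apply Submodule.sum_mem
    intro g hg
    apply Submodule.smul_mem
    apply Submodule.subset_span
    have hgP : g.1 ∈ (Finset.Icc (k+1) n).powersetCard 2 :=
      Finset.mem_powersetCard.mpr ⟨(Finset.mem_filter.mp hg).2, (mem_edgesN.mp g.2).2⟩
    exact ⟨⟨g.1, hgP⟩, rfl⟩
  · rw [Submodule.span_le]
    rintro _ ⟨e, rfl⟩
    intro g hg
    show vN n e.1 g = 0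
    rw [vN_apply, if_neg]
    intro hh
    exact hg (hh ▸ (Finset.mem_powersetCard.mp e.2).1)

lemma Usub_indep :
    LinearIndependent ℝ
      (fun e : ↥((Finset.Icc (k+1) n).powersetCard 2) => vN n e.1) := by
  have hmem : ∀ e : ↥((Finset.Icc (k+1) n).powersetCard 2), e.1 ∈ edgesN n := by
    intro e
    obtain ⟨h1, h2⟩ := Finset.mem_powersetCard.mp e.2
    exact mem_edgesN.mpr ⟨h1.trans I_subset, h2⟩
  apply linearIndependent_of_eval _ (fun e => ⟨e.1, hmem e⟩)
  intro idx idx'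
  rw [vN_apply]
  by_cases h : idx = idx'
  · subst h; rw [if_pos rfl, if_pos rfl]
  · rw [if_neg (fun hh => h (Subtype.ext hh)), if_neg h]

lemma Usub_rank (hn : k + 4 ≤ n) :
    finrank ℝ ↥(Usub n k) = (n - k).choose 2 := by
  rw [Usub_eq_span, finrank_span_eq_card Usub_indep, Fintype.card_coe,
    Finset.card_powersetCard, card_I (by omega : k ≤ n)]

lemma single_in_range (hn : k + 4 ≤ n) (m : ↥(Finset.Icc (k+1) n)) :
    (fun m' => if m = m' then (1:ℝ) else 0)
      ∈ LinearMap.range ((Lmap n k).domRestrict (Usub n k)) := by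
  -- choose a b ∈ I distinct from m and each other
  have h1 : (k+1) ∈ Finset.Icc (k+1) n := by rw [mem_I]; omega
  have h2 : (k+2) ∈ Finset.Icc (k+1) n := by rw [mem_I]; omega
  have h3 : (k+3) ∈ Finset.Icc (k+1) n := by rw [mem_I]; omega
  obtain ⟨a, b, haI, hbI, hma, hmb, hab⟩ :
      ∃ a b : ℕ, a ∈ Finset.Icc (k+1) n ∧ b ∈ Finset.Icc (k+1) n ∧ m.1 ≠ a ∧ m.1 ≠ b ∧ a ≠ b := by
    by_cases hm1 : m.1 = k+1
    · exact ⟨k+2, k+3, h2, h3, by omega, by omega, by omega⟩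
    · by_cases hm2 : m.1 = k+2
      · exact ⟨k+1, k+3, h1, h3, by omega, by omega, by omega⟩
      · exact ⟨k+1, k+2, h1, h2, by omega, by omega, by omega⟩
  have hmI : m.1 ∈ Finset.Icc (k+1) n := m.2
  have hea : ({m.1, a} : Finset ℕ) ∈ edgesN n :=
    pair_mem_edgesN (I_subset hmI) (I_subset haI) hma
  have heb : ({m.1, b} : Finset ℕ) ∈ edgesN n :=
    pair_mem_edgesN (I_subset hmI) (I_subset hbI) hmb
  have hec : ({a, b} : Finset ℕ) ∈ edgesN n :=
    pair_mem_edgesN (I_subset haI) (I_subset hbI) hab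
  set wv : ↥(edgesN n) → ℝ :=
    (1/2 : ℝ) • (vN n {m.1, a} + vN n {m.1, b} - vN n {a, b}) with hwv
  have hU : wv ∈ Usub n k := by
    intro g hg
    have hz : ∀ p q : ℕ, p ∈ Finset.Icc (k+1) n → q ∈ Finset.Icc (k+1) n →
        vN n ({p, q} : Finset ℕ) g = 0 := by
      intro p q hp hq
      rw [vN_apply, if_neg]
      intro hh
      apply hg
      rw [hh]
      intro z hz'
      rcases mem_pair.mp hz' with rfl | rfl <;> assumption
    simp only [hwv, Pi.smul_apply, Pi.add_apply, Pi.sub_apply,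
      hz m.1 a hmI haI, hz m.1 b hmI hbI, hz a b haI hbI]
    simp
  refine ⟨⟨wv, hU⟩, ?_⟩
  show Lmap n k wv = _
  funext m'
  show vsumL n m'.1 wv = if m = m' then (1:ℝ) else 0
  rw [hwv, map_smul, map_sub, map_add, vsumL_vN hea, vsumL_vN heb, vsumL_vN hec,
    smul_eq_mul]
  have hcoe : (m = m') ↔ (m'.1 = m.1) := by
    rw [Subtype.ext_iff]; exact eq_comm
  by_cases hzm : m'.1 = m.1
  · rw [if_pos (hcoe.mpr hzm)]
    have e1 : m'.1 ∈ ({m.1, a} : Finset ℕ) := mem_pair.mpr (Or.inl hzm)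
    have e2 : m'.1 ∈ ({m.1, b} : Finset ℕ) := mem_pair.mpr (Or.inl hzm)
    have e3 : m'.1 ∉ ({a, b} : Finset ℕ) := by
      intro hh
      rcases mem_pair.mp hh with h | h
      · exact hma (hzm ▸ h : m.1 = a)
      · exact hmb (hzm ▸ h : m.1 = b)
    rw [if_pos e1, if_pos e2, if_neg e3]
    ring
  · rw [if_neg (fun hh => hzm (hcoe.mp hh))]
    by_cases hza : m'.1 = a
    · have e1 : m'.1 ∈ ({m.1, a} : Finset ℕ) := mem_pair.mpr (Or.inr hza)
      have e2 : m'.1 ∉ ({m.1, b} : Finset ℕ) := by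
        intro hh
        rcases mem_pair.mp hh with h | h
        · exact hzm h
        · exact hab (hza ▸ h ▸ rfl : a = b)
      have e3 : m'.1 ∈ ({a, b} : Finset ℕ) := mem_pair.mpr (Or.inl hza)
      rw [if_pos e1, if_neg e2, if_pos e3]
      ring
    · by_cases hzb : m'.1 = b
      · have e1 : m'.1 ∉ ({m.1, a} : Finset ℕ) := by
          intro hh
          rcases mem_pair.mp hh with h | h
          · exact hzm h
          · exact hza h
        have e2 : m'.1 ∈ ({m.1, b} : Finset ℕ) := mem_pair.mpr (Or.inr hzb)
        have e3 : m'.1 ∈ ({a, b} : Finset ℕ) := mem_pair.mpr (Or.inr hzb)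
        rw [if_neg e1, if_pos e2, if_pos e3]
        ring
      · have e1 : m'.1 ∉ ({m.1, a} : Finset ℕ) := by
          intro hh; rcases mem_pair.mp hh with h | h; exacts [hzm h, hza h]
        have e2 : m'.1 ∉ ({m.1, b} : Finset ℕ) := by
          intro hh; rcases mem_pair.mp hh with h | h; exacts [hzm h, hzb h]
        have e3 : m'.1 ∉ ({a, b} : Finset ℕ) := by
          intro hh; rcases mem_pair.mp hh with h | h; exacts [hza h, hzb h]
        rw [if_neg e1, if_neg e2, if_neg e3]
        ring

lemma Lres_surj (hn : k + 4 ≤ n) :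
    LinearMap.range ((Lmap n k).domRestrict (Usub n k)) = ⊤ := by
  rw [eq_top_iff]
  intro v _
  have hv : v = ∑ m : ↥(Finset.Icc (k+1) n), v m • (fun m' => if m = m' then (1:ℝ) else 0) := by
    funext m'
    rw [Finset.sum_apply]
    simp only [Pi.smul_apply, smul_eq_mul, mul_ite, mul_one, mul_zero]
    rw [Finset.sum_ite_eq' Finset.univ m' v, if_pos (Finset.mem_univ m')]
  rw [hv]
  exact Submodule.sum_mem _ fun m _ => Submodule.smul_mem _ _ (single_in_range hn m)

set_option maxHeartbeats 1000000 in
set_option synthInstance.maxHeartbeats 400000 in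
lemma V3_rank (hn : k + 4 ≤ n) :
    finrank ℝ ↥(V3sub n k) = (n - k).choose 2 - (n - k) := by
  have hrn := LinearMap.finrank_range_add_finrank_ker ((Lmap n k).domRestrict (Usub n k))
  rw [Lres_surj hn, finrank_top] at hrn
  have hfin : finrank ℝ (↥(Finset.Icc (k+1) n) → ℝ) = n - k := by
    rw [Module.finrank_fintype_fun_eq_card, Fintype.card_coe, card_I (by omega : k ≤ n)]
  rw [hfin, Usub_rank hn] at hrn
  have heq : finrank ℝ ↥(V3sub n k)
      = finrank ℝ ↥(LinearMap.ker ((Lmap n k).domRestrict (Usub n k))) := by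
    rw [← V3_eq_map]
    exact (LinearEquiv.finrank_eq (Submodule.equivMapOfInjective (Usub n k).subtype
      (Submodule.injective_subtype _) (LinearMap.ker ((Lmap n k).domRestrict (Usub n k))))).symm
  rw [heq]
  omega

end Dim3

/-- **Proposition 4.1 (decomposition of `ℝ^E` into `S_{n-k}`-invariant subspaces):**
for `n ≥ k+4` the subspaces are pairwise orthogonal, `S_{n-k}`-invariant, they span all
of `ℝ^E`, and their dimensions are `1`, `1`, `1`, `n−k−1`, `n−k−1` and `C(n−k,2)−(n−k)`. -/
theorem Vfam_decomposition (k n : ℕ) (hn : k + 4 ≤ n) :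
    (∀ i j : DecompIdx k, i ≠ j →
      ∀ v ∈ Vfam n k i, ∀ w ∈ Vfam n k j, ∑ g, v g * w g = 0)
    ∧ (∀ σ : Equiv.Perm ℕ, FixPerm n k σ → ∀ i : DecompIdx k, ∀ w ∈ Vfam n k i,
        (fun g => w (permEdge n σ g)) ∈ Vfam n k i)
    ∧ iSup (Vfam n k) = ⊤
    ∧ (∀ e : ↥(edgesN k), Module.finrank ℝ ↥(Vfam n k (.inl e)) = 1)
    ∧ (∀ j : ↥(Finset.Icc 1 k), Module.finrank ℝ ↥(Vfam n k (.inr (.inl j))) = 1)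
    ∧ Module.finrank ℝ ↥(Vfam n k (.inr (.inr (.inl ())))) = 1
    ∧ (∀ j : ↥(Finset.Icc 1 k),
        Module.finrank ℝ ↥(Vfam n k (.inr (.inr (.inr (.inl j))))) = n - k - 1)
    ∧ Module.finrank ℝ ↥(Vfam n k (.inr (.inr (.inr (.inr (.inl ())))))) = n - k - 1
    ∧ Module.finrank ℝ ↥(Vfam n k (.inr (.inr (.inr (.inr (.inr ()))))))
        = Nat.choose (n - k) 2 - (n - k) := by
  refine ⟨orth_main (by omega), fun σ hσ => invar_main hσ, iSup_Vfam_eq_top hn,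
    fun e => ?_, fun j => ?_, ?_, fun j => V2j_rank hn j.2, V2'_rank hn, V3_rank hn⟩
  · exact finrank_span_singleton (vN_ne_zero (edgesK_subset (by omega) e.2))
  · exact finrank_span_singleton (rowSum_ne_zero hn j.2)
  · exact finrank_span_singleton (outer_ne_zero hn)
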